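/- Let W and W̃ be two Markov generators on n states with identical diagonals (equal exit rates), equal (1,2) and (2,1) entries, and W̃_{ij} = W_{ji} p^st_i/p^st_j for all other off-diagonal pairs. For any finite sequence of states i_0, i_1, …, i_N with i_N = i_0 and consecutive states distinct, the ratio of products of transition rates satisfies ∏_{n} W_{i_{n+1} i_n} / ∏_n W̃_{i_{n+1} i_n} = exp( −F̃ φ ) · ∏_n ( W_{i_{n+1} i_n} / W_{i_n i_{n+1}} ), where φ is the net number of 2→1 minus 1→2 transitions in the sequence and F̃ = log(W_{12} p^st_2/(W_{21} p^st_1)). -/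

import Mathlib

lemma fin_telescope : ∀ {N : ℕ} (f : Fin (N+1) → ℝ), (∀ i, f i ≠ 0) →
    ∏ s : Fin N, f s.castSucc / f s.succ = f 0 / f (Fin.last N) := by
  intro N
  induction N with
  | zero => intro f hf; simp [Fin.last, div_self (hf 0)]
  | succ n ih =>
    intro f hf
    rw [Fin.prod_univ_castSucc]
    have h := ih (f ∘ Fin.castSucc) (fun i => hf _)
    simp only [Function.comp] at h
    simp only [Fin.succ_castSucc]
    rw [h]
    have : f (Fin.castSucc 0) = f 0 := rfl
    rw [this, div_mul_div_cancel₀ (hf _)]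
    rw [Fin.succ_last]

theorem trajectory_ratio_identity {m : ℕ}
    (W Wtil : Matrix (Fin (m + 3)) (Fin (m + 3)) ℝ)
    (pst : Fin (m + 3) → ℝ) (hpst : ∀ i, 0 < pst i)
    (h12pos : 0 < W 0 1) (h21pos : 0 < W 1 0)
    (hdiag : ∀ i : Fin (m + 3), Wtil i i = W i i)
    (hWtil12 : Wtil 0 1 = W 0 1) (hWtil21 : Wtil 1 0 = W 1 0)
    (hWtil : ∀ i j : Fin (m + 3), i ≠ j →
      ¬((i = 0 ∧ j = 1) ∨ (i = 1 ∧ j = 0)) →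
      Wtil i j = W j i * pst i / pst j)
    (N : ℕ) (c : Fin (N + 1) → Fin (m + 3))
    (hcyc : c (Fin.last N) = c 0)
    (hdist : ∀ s : Fin N, c s.castSucc ≠ c s.succ)
    (hposfwd : ∀ s : Fin N, 0 < W (c s.succ) (c s.castSucc))
    (hposbwd : ∀ s : Fin N, 0 < W (c s.castSucc) (c s.succ)) :
    (∏ s : Fin N, W (c s.succ) (c s.castSucc)) /
      (∏ s : Fin N, Wtil (c s.succ) (c s.castSucc)) =
    Real.exp (-(Real.log (W 0 1 * pst 1 / (W 1 0 * pst 0))) *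
        (∑ s : Fin N,
          ((if c s.succ = 0 ∧ c s.castSucc = 1 then (1 : ℝ) else 0) -
           (if c s.succ = 1 ∧ c s.castSucc = 0 then (1 : ℝ) else 0)))) *
      ∏ s : Fin N, (W (c s.succ) (c s.castSucc) / W (c s.castSucc) (c s.succ)) := by
  have hX : 0 < W 0 1 * pst 1 / (W 1 0 * pst 0) := by
    have := hpst 0; have := hpst 1; positivity
  have h01 : (0 : Fin (m+3)) ≠ 1 := by simp [Fin.ext_iff]
  set F : ℝ := Real.log (W 0 1 * pst 1 / (W 1 0 * pst 0)) with hF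
  -- per-step identity
  have hstep : ∀ s : Fin N,
      W (c s.succ) (c s.castSucc) / Wtil (c s.succ) (c s.castSucc) =
      Real.exp (-F * ((if c s.succ = 0 ∧ c s.castSucc = 1 then (1:ℝ) else 0) -
        (if c s.succ = 1 ∧ c s.castSucc = 0 then (1:ℝ) else 0))) *
      (W (c s.succ) (c s.castSucc) / W (c s.castSucc) (c s.succ)) *
      (pst (c s.castSucc) / pst (c s.succ)) := by
    intro s
    have hp0 := (hpst (c s.castSucc)).ne'
    have hp1 := (hpst (c s.succ)).ne'
    have hb := (hposbwd s).ne'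
    have ha := (h12pos).ne'
    have hc := (h21pos).ne'
    have hq0 := (hpst 0).ne'
    have hq1 := (hpst 1).ne'
    by_cases h1 : c s.succ = 0 ∧ c s.castSucc = 1
    · have hn2 : ¬(c s.succ = 1 ∧ c s.castSucc = 0) := by
        rintro ⟨h, -⟩; rw [h1.1] at h; exact h01 h
      rw [if_pos h1, if_neg hn2, h1.1, h1.2]
      rw [hWtil12]
      rw [show -F * ((1:ℝ) - 0) = -F by ring, Real.exp_neg, hF, Real.exp_log hX]
      field_simp
    · by_cases h2 : c s.succ = 1 ∧ c s.castSucc = 0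
      · rw [if_neg h1, if_pos h2, h2.1, h2.2]
        rw [hWtil21]
        rw [show -F * ((0:ℝ) - 1) = F by ring, hF, Real.exp_log hX]
        field_simp
      · rw [if_neg h1, if_neg h2]
        rw [hWtil _ _ (hdist s).symm (by tauto)]
        rw [show -F * ((0:ℝ) - 0) = 0 by ring, Real.exp_zero, one_mul]
        field_simp
  calc (∏ s : Fin N, W (c s.succ) (c s.castSucc)) /
        (∏ s : Fin N, Wtil (c s.succ) (c s.castSucc))
      = ∏ s : Fin N, (W (c s.succ) (c s.castSucc) / Wtil (c s.succ) (c s.castSucc)) := by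
        rw [Finset.prod_div_distrib]
    _ = ∏ s : Fin N, (Real.exp (-F * ((if c s.succ = 0 ∧ c s.castSucc = 1 then (1:ℝ) else 0) -
          (if c s.succ = 1 ∧ c s.castSucc = 0 then (1:ℝ) else 0))) *
        (W (c s.succ) (c s.castSucc) / W (c s.castSucc) (c s.succ)) *
        (pst (c s.castSucc) / pst (c s.succ))) := Finset.prod_congr rfl (fun s _ => hstep s)
    _ = (∏ s : Fin N, Real.exp (-F * ((if c s.succ = 0 ∧ c s.castSucc = 1 then (1:ℝ) else 0) -
          (if c s.succ = 1 ∧ c s.castSucc = 0 then (1:ℝ) else 0)))) *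
        (∏ s : Fin N, (W (c s.succ) (c s.castSucc) / W (c s.castSucc) (c s.succ))) *
        (∏ s : Fin N, pst (c s.castSucc) / pst (c s.succ)) := by
        rw [Finset.prod_mul_distrib, Finset.prod_mul_distrib]
    _ = Real.exp (-F * (∑ s : Fin N,
          ((if c s.succ = 0 ∧ c s.castSucc = 1 then (1:ℝ) else 0) -
           (if c s.succ = 1 ∧ c s.castSucc = 0 then (1:ℝ) else 0)))) *
        (∏ s : Fin N, (W (c s.succ) (c s.castSucc) / W (c s.castSucc) (c s.succ))) := by
        rw [fin_telescope (fun i => pst (c i)) (fun i => (hpst (c i)).ne'), hcyc,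
          div_self (hpst (c 0)).ne', mul_one, Finset.mul_sum, ← Real.exp_sum]
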